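/- With M and Ω as in the 5D type II Weyl operator (M the 3×3 b.w.-0 block, Ω the 4×4 b.w.-0 block, built from traceless S = diag with R_i = S_i + R/3 and w ∈ ℝ³): both M and Ω are nilpotent if and only if, after a suitable permutation of indices, R = 0, R₄ = 0, R₃ = -R₅ ≠ 0, 2w₃² = 2w₅² = R₅², and w₄ = 0. In that case M³ = 0 ≠ M² and Ω³ = 0 ≠ Ω². -/

import Mathlib

open Matrix

/-- Levi-Civita symbol on three indices. -/
def eps (i j k : Fin 3) : ℝ :=
  if (i = 0 ∧ j = 1 ∧ k = 2) ∨ (i = 1 ∧ j = 2 ∧ k = 0) ∨ (i = 2 ∧ j = 0 ∧ k = 1) then 1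
  else if (i = 0 ∧ j = 2 ∧ k = 1) ∨ (i = 2 ∧ j = 1 ∧ k = 0) ∨ (i = 1 ∧ j = 0 ∧ k = 2) then -1
  else 0

/-- The `M` matrix in explicit form. -/
private noncomputable def MX (Rv w : Fin 3 → ℝ) : Matrix (Fin 3) (Fin 3) ℝ :=
  !![-Rv 0/2, -w 2/2, w 1/2; w 2/2, -Rv 1/2, -w 0/2; -w 1/2, w 0/2, -Rv 2/2]

/-- The `Ω` matrix in explicit form (when `R = 0`). -/
private noncomputable def OX (Rv w : Fin 3 → ℝ) : Matrix (Fin 4) (Fin 4) ℝ :=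
  !![0, -w 0, -w 1, -w 2; w 0, -Rv 0, 0, 0; w 1, 0, -Rv 1, 0; w 2, 0, 0, -Rv 2]

private lemma trace_pow_zero {n : Type*} [Fintype n] [DecidableEq n]
    {A : Matrix n n ℝ} (h : IsNilpotent A) {k : ℕ} (hk : k ≠ 0) :
    Matrix.trace (A ^ k) = 0 := by
  have hnk : IsNilpotent (A ^ k) := by
    obtain ⟨m, hm⟩ := h
    exact ⟨m, by rw [← pow_mul, mul_comm, pow_mul, hm, zero_pow hk]⟩
  exact (Matrix.isNilpotent_trace_of_isNilpotent hnk).eq_zero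

private lemma det_zero_of_nilp {n : Type*} [Fintype n] [DecidableEq n] [Nonempty n]
    {A : Matrix n n ℝ} (h : IsNilpotent A) : A.det = 0 := by
  obtain ⟨m, hm⟩ := h
  rcases Nat.eq_zero_or_pos m with rfl | hm'
  · exfalso
    have h1 : (1 : Matrix n n ℝ) = 0 := by simpa using hm
    have := congr_arg Matrix.det h1
    rw [Matrix.det_one, Matrix.det_zero] at this
    exact one_ne_zero this
  · have hd : A.det ^ m = 0 := by
      rw [← Matrix.det_pow, hm, Matrix.det_zero]
    exact pow_eq_zero_iff hm'.ne' |>.mp hd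

private lemma flipD (a b x y : ℝ) (h2 : b = -a) (h3 : a ≠ 0)
    (h4 : 2*x^2 = a^2) (h5 : 2*y^2 = a^2) :
    a = -b ∧ b ≠ 0 ∧ 2*x^2 = b^2 ∧ 2*y^2 = b^2 := by
  refine ⟨by linarith, fun h => h3 (by linarith), ?_, ?_⟩
  · linear_combination h4 + (a - b) * h2
  · linear_combination h5 + (a - b) * h2

private lemma solveD (Ri Rj Rk wi wj wk : ℝ)
    (hne : ¬(Ri = 0 ∧ Rj = 0 ∧ Rk = 0 ∧ wi = 0 ∧ wj = 0 ∧ wk = 0))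
    (c1 : Ri + Rj + Rk = 0)
    (c2 : Ri^2 + Rj^2 + Rk^2 = 2*(wi^2 + wj^2 + wk^2))
    (c3 : Ri*wi^2 + Rj*wj^2 + Rk*wk^2 = 0)
    (c5 : wi^2*Rj*Rk + wj^2*Ri*Rk + wk^2*Ri*Rj = 0)
    (hRj : Rj = 0) :
    Rj = 0 ∧ Ri = -Rk ∧ Rk ≠ 0 ∧ 2*wi^2 = Rk^2 ∧ 2*wk^2 = Rk^2 ∧ wj = 0 := by
  have h2 : Ri = -Rk := by linarith
  have hk : Rk ≠ 0 := by
    intro h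
    have hi : Ri = 0 := by linarith
    have hw : 0 = 2*(wi^2 + wj^2 + wk^2) := by rw [← c2, hi, hRj, h]; ring
    have hwi : wi = 0 := by
      refine pow_eq_zero_iff two_ne_zero |>.mp ?_
      nlinarith [sq_nonneg wi, sq_nonneg wj, sq_nonneg wk]
    have hwj : wj = 0 := by
      refine pow_eq_zero_iff two_ne_zero |>.mp ?_
      nlinarith [sq_nonneg wi, sq_nonneg wj, sq_nonneg wk]
    have hwk : wk = 0 := by
      refine pow_eq_zero_iff two_ne_zero |>.mp ?_
      nlinarith [sq_nonneg wi, sq_nonneg wj, sq_nonneg wk]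
    exact hne ⟨hi, hRj, h, hwi, hwj, hwk⟩
  have hwjsq : wj^2 * Rk^2 = 0 := by
    linear_combination (-1)*c5 + (wi^2*Rk + wk^2*Ri)*hRj + (wj^2*Rk)*h2
  have hwj : wj = 0 := by
    rcases mul_eq_zero.mp hwjsq with h|h
    · exact pow_eq_zero_iff two_ne_zero |>.mp h
    · exact absurd (pow_eq_zero_iff two_ne_zero |>.mp h) hk
  have heq : wk^2 = wi^2 := by
    have hx : Rk * (wk^2 - wi^2) = 0 := by
      linear_combination c3 + (-wj^2)*hRj + (-wi^2)*h2
    have := (mul_eq_zero.mp hx).resolve_left hk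
    linarith
  have hfi : 2*wi^2 = Rk^2 := by
    linear_combination (-1/2)*c2 + (-1)*heq + (-wj)*hwj + ((Ri-Rk)/2)*h2 + (Rj/2)*hRj
  exact ⟨hRj, h2, hk, hfi, by linear_combination hfi + 2*heq, hwj⟩

private lemma caseD0 (Rv w : Fin 3 → ℝ) (h1 : Rv 0 = 0) (h2 : Rv 1 = -Rv 2)
    (h3 : Rv 2 ≠ 0) (h4 : 2*w 1^2 = Rv 2^2) (h5 : 2*w 2^2 = Rv 2^2) (h6 : w 0 = 0) :
    (MX Rv w)^3 = 0 ∧ (MX Rv w)^2 ≠ 0 ∧ (OX Rv w)^3 = 0 ∧ (OX Rv w)^2 ≠ 0 := by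
  refine ⟨?_, ?_, ?_, ?_⟩
  · rw [pow_succ, pow_two]
    ext a b
    fin_cases a <;> fin_cases b <;>
      simp only [MX, Matrix.mul_apply, Fin.sum_univ_three, Fin.mk_zero, Fin.mk_one,
        Fin.reduceFinMk, Matrix.of_apply, Matrix.cons_val', Matrix.cons_val_zero,
        Matrix.cons_val_one, Matrix.head_cons, Matrix.head_fin_const, Matrix.empty_val',
        Matrix.cons_val_fin_one, Matrix.zero_apply, Matrix.cons_val_two, Matrix.tail_cons]
    · linear_combination ((1/4)*w 2^2 + (1/4)*w 1^2 + (-1/8)*Rv 0^2) * h1 + ((1/8)*w 2^2) * h2 + ((1/16)*Rv 2) * h4 + ((-1/16)*Rv 2) * h5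
    · linear_combination ((-1/8)*w 0*w 1 + (-1/8)*Rv 1*w 2 + (-1/8)*Rv 0*w 2) * h1 + ((-1/8)*w 0*w 1 + (1/8)*Rv 2*w 2 + (-1/8)*Rv 1*w 2) * h2 + ((1/16)*w 2) * h4 + ((1/16)*w 2) * h5 + ((1/8)*w 0*w 2) * h6
    · linear_combination ((-1/8)*w 0*w 2 + (1/8)*Rv 2*w 1 + (1/8)*Rv 0*w 1) * h1 + ((-1/8)*w 0*w 2) * h2 + ((-1/16)*w 1) * h4 + ((-1/16)*w 1) * h5 + ((-1/8)*w 0*w 1) * h6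
    · linear_combination ((-1/8)*w 0*w 1 + (1/8)*Rv 1*w 2 + (1/8)*Rv 0*w 2) * h1 + ((-1/8)*w 0*w 1 + (-1/8)*Rv 2*w 2 + (1/8)*Rv 1*w 2) * h2 + ((-1/16)*w 2) * h4 + ((-1/16)*w 2) * h5 + ((-1/8)*w 0*w 2) * h6
    · linear_combination ((1/8)*w 2^2) * h1 + ((1/4)*w 2^2 + (1/4)*w 0^2 + (-1/8)*Rv 2^2 + (1/8)*Rv 1*Rv 2 + (-1/8)*Rv 1^2) * h2 + ((-1/8)*Rv 2) * h5 + ((-1/8)*Rv 2*w 0) * h6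
    · linear_combination ((-1/8)*w 1*w 2) * h1 + ((-1/8)*w 1*w 2 + (-1/8)*Rv 1*w 0) * h2 + ((1/16)*w 0) * h4 + ((1/16)*w 0) * h5 + ((1/8)*w 0^2) * h6
    · linear_combination ((-1/8)*w 0*w 2 + (-1/8)*Rv 2*w 1 + (-1/8)*Rv 0*w 1) * h1 + ((-1/8)*w 0*w 2) * h2 + ((1/16)*w 1) * h4 + ((1/16)*w 1) * h5 + ((1/8)*w 0*w 1) * h6
    · linear_combination ((-1/8)*w 1*w 2) * h1 + ((-1/8)*w 1*w 2 + (1/8)*Rv 1*w 0) * h2 + ((-1/16)*w 0) * h4 + ((-1/16)*w 0) * h5 + ((-1/8)*w 0^2) * h6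
    · linear_combination ((1/8)*w 1^2) * h1 + ((1/8)*w 0^2) * h2 + ((1/8)*Rv 2) * h4 + ((1/8)*Rv 2*w 0) * h6
  · intro hz
    rw [pow_two] at hz
    have e := congr_fun (congr_fun hz 0) 1
    simp only [MX, Matrix.mul_apply, Fin.sum_univ_three, Fin.mk_zero, Fin.mk_one,
      Fin.reduceFinMk, Matrix.of_apply, Matrix.cons_val', Matrix.cons_val_zero,
      Matrix.cons_val_one, Matrix.head_cons, Matrix.head_fin_const, Matrix.empty_val',
      Matrix.cons_val_fin_one, Matrix.zero_apply, Matrix.cons_val_two, Matrix.tail_cons] at e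
    have key : Rv 2 * w 2 = 0 := by
      linear_combination (-4 : ℝ) * e + ((1)*w 2) * h1 + ((1)*w 2) * h2 + ((1)*w 1) * h6
    rcases mul_eq_zero.mp key with h|h
    · exact h3 h
    · refine h3 (pow_eq_zero_iff two_ne_zero |>.mp ?_)
      rw [← h5, h]; ring
  · rw [pow_succ, pow_two]
    ext a b
    fin_cases a <;> fin_cases b <;>
      simp only [OX, Matrix.mul_apply, Fin.sum_univ_four, Fin.mk_zero, Fin.mk_one,
        Fin.reduceFinMk, Matrix.of_apply, Matrix.cons_val', Matrix.cons_val_zero,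
        Matrix.cons_val_one, Matrix.head_cons, Matrix.head_fin_const, Matrix.empty_val',
        Matrix.cons_val_fin_one, Matrix.zero_apply, Matrix.cons_val_two, Matrix.tail_cons, Matrix.cons_val_three]
    · linear_combination ((1)*w 0^2) * h1 + ((1)*w 1^2) * h2 + ((-1/2)*Rv 2) * h4 + ((1/2)*Rv 2) * h5
    · linear_combination ((-1)*Rv 0*w 0) * h1 + ((1/2)*w 0) * h4 + ((1/2)*w 0) * h5 + ((1)*w 0^2 + (1)*Rv 2^2) * h6
    · linear_combination ((1)*Rv 2*w 1 + (-1)*Rv 1*w 1) * h2 + ((1/2)*w 1) * h4 + ((1/2)*w 1) * h5 + ((1)*w 0*w 1) * h6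
    · linear_combination ((1/2)*w 2) * h4 + ((1/2)*w 2) * h5 + ((1)*w 0*w 2) * h6
    · linear_combination ((1)*Rv 0*w 0) * h1 + ((-1/2)*w 0) * h4 + ((-1/2)*w 0) * h5 + ((-1)*w 0^2 + (-1)*Rv 2^2) * h6
    · linear_combination ((2)*w 0^2 + (-1)*Rv 0^2) * h1
    · linear_combination ((1)*w 0*w 1) * h1 + ((1)*w 0*w 1) * h2 + ((-1)*Rv 2*w 1) * h6
    · linear_combination ((1)*w 0*w 2) * h1 + ((1)*Rv 2*w 2) * h6
    · linear_combination ((-1)*Rv 2*w 1 + (1)*Rv 1*w 1) * h2 + ((-1/2)*w 1) * h4 + ((-1/2)*w 1) * h5 + ((-1)*w 0*w 1) * h6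
    · linear_combination ((1)*w 0*w 1) * h1 + ((1)*w 0*w 1) * h2 + ((-1)*Rv 2*w 1) * h6
    · linear_combination ((2)*w 1^2 + (-1)*Rv 2^2 + (1)*Rv 1*Rv 2 + (-1)*Rv 1^2) * h2 + ((-1)*Rv 2) * h4
    · linear_combination ((1)*w 1*w 2) * h2
    · linear_combination ((-1/2)*w 2) * h4 + ((-1/2)*w 2) * h5 + ((-1)*w 0*w 2) * h6
    · linear_combination ((1)*w 0*w 2) * h1 + ((1)*Rv 2*w 2) * h6
    · linear_combination ((1)*w 1*w 2) * h2
    · linear_combination ((1)*Rv 2) * h5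
  · intro hz
    rw [pow_two] at hz
    have e := congr_fun (congr_fun hz 0) 3
    simp only [OX, Matrix.mul_apply, Fin.sum_univ_four, Fin.mk_zero, Fin.mk_one,
      Fin.reduceFinMk, Matrix.of_apply, Matrix.cons_val', Matrix.cons_val_zero,
      Matrix.cons_val_one, Matrix.head_cons, Matrix.head_fin_const, Matrix.empty_val',
      Matrix.cons_val_fin_one, Matrix.zero_apply, Matrix.cons_val_two, Matrix.tail_cons,
      Matrix.cons_val_three] at e
    have key : Rv 2 * w 2 = 0 := by
      linear_combination (1 : ℝ) * e + (0 : ℝ) * h1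
    rcases mul_eq_zero.mp key with h|h
    · exact h3 h
    · refine h3 (pow_eq_zero_iff two_ne_zero |>.mp ?_)
      rw [← h5, h]; ring
private lemma caseD1 (Rv w : Fin 3 → ℝ) (h1 : Rv 1 = 0) (h2 : Rv 0 = -Rv 2)
    (h3 : Rv 2 ≠ 0) (h4 : 2*w 0^2 = Rv 2^2) (h5 : 2*w 2^2 = Rv 2^2) (h6 : w 1 = 0) :
    (MX Rv w)^3 = 0 ∧ (MX Rv w)^2 ≠ 0 ∧ (OX Rv w)^3 = 0 ∧ (OX Rv w)^2 ≠ 0 := by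
  refine ⟨?_, ?_, ?_, ?_⟩
  · rw [pow_succ, pow_two]
    ext a b
    fin_cases a <;> fin_cases b <;>
      simp only [MX, Matrix.mul_apply, Fin.sum_univ_three, Fin.mk_zero, Fin.mk_one,
        Fin.reduceFinMk, Matrix.of_apply, Matrix.cons_val', Matrix.cons_val_zero,
        Matrix.cons_val_one, Matrix.head_cons, Matrix.head_fin_const, Matrix.empty_val',
        Matrix.cons_val_fin_one, Matrix.zero_apply, Matrix.cons_val_two, Matrix.tail_cons]
    · linear_combination ((1/8)*w 2^2) * h1 + ((1/4)*w 2^2 + (1/4)*w 1^2 + (-1/8)*Rv 2^2 + (1/8)*Rv 0*Rv 2 + (-1/8)*Rv 0^2) * h2 + ((-1/8)*Rv 2) * h5 + ((-1/8)*Rv 2*w 1) * h6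
    · linear_combination ((-1/8)*w 0*w 1 + (-1/8)*Rv 1*w 2 + (-1/8)*Rv 0*w 2) * h1 + ((-1/8)*w 0*w 1 + (1/8)*Rv 2*w 2 + (-1/8)*Rv 0*w 2) * h2 + ((1/16)*w 2) * h4 + ((1/16)*w 2) * h5 + ((1/8)*w 1*w 2) * h6
    · linear_combination ((-1/8)*w 0*w 2) * h1 + ((-1/8)*w 0*w 2 + (1/8)*Rv 0*w 1) * h2 + ((-1/16)*w 1) * h4 + ((-1/16)*w 1) * h5 + ((-1/8)*w 1^2) * h6
    · linear_combination ((-1/8)*w 0*w 1 + (1/8)*Rv 1*w 2 + (1/8)*Rv 0*w 2) * h1 + ((-1/8)*w 0*w 1 + (-1/8)*Rv 2*w 2 + (1/8)*Rv 0*w 2) * h2 + ((-1/16)*w 2) * h4 + ((-1/16)*w 2) * h5 + ((-1/8)*w 1*w 2) * h6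
    · linear_combination ((1/4)*w 2^2 + (1/4)*w 0^2 + (-1/8)*Rv 1^2) * h1 + ((1/8)*w 2^2) * h2 + ((1/16)*Rv 2) * h4 + ((-1/16)*Rv 2) * h5
    · linear_combination ((-1/8)*w 1*w 2 + (-1/8)*Rv 2*w 0 + (-1/8)*Rv 1*w 0) * h1 + ((-1/8)*w 1*w 2) * h2 + ((1/16)*w 0) * h4 + ((1/16)*w 0) * h5 + ((1/8)*w 0*w 1) * h6
    · linear_combination ((-1/8)*w 0*w 2) * h1 + ((-1/8)*w 0*w 2 + (-1/8)*Rv 0*w 1) * h2 + ((1/16)*w 1) * h4 + ((1/16)*w 1) * h5 + ((1/8)*w 1^2) * h6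
    · linear_combination ((-1/8)*w 1*w 2 + (1/8)*Rv 2*w 0 + (1/8)*Rv 1*w 0) * h1 + ((-1/8)*w 1*w 2) * h2 + ((-1/16)*w 0) * h4 + ((-1/16)*w 0) * h5 + ((-1/8)*w 0*w 1) * h6
    · linear_combination ((1/8)*w 0^2) * h1 + ((1/8)*w 1^2) * h2 + ((1/8)*Rv 2) * h4 + ((1/8)*Rv 2*w 1) * h6
  · intro hz
    rw [pow_two] at hz
    have e := congr_fun (congr_fun hz 0) 1
    simp only [MX, Matrix.mul_apply, Fin.sum_univ_three, Fin.mk_zero, Fin.mk_one,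
      Fin.reduceFinMk, Matrix.of_apply, Matrix.cons_val', Matrix.cons_val_zero,
      Matrix.cons_val_one, Matrix.head_cons, Matrix.head_fin_const, Matrix.empty_val',
      Matrix.cons_val_fin_one, Matrix.zero_apply, Matrix.cons_val_two, Matrix.tail_cons] at e
    have key : Rv 2 * w 2 = 0 := by
      linear_combination (-4 : ℝ) * e + ((1)*w 2) * h1 + ((1)*w 2) * h2 + ((1)*w 0) * h6
    rcases mul_eq_zero.mp key with h|h
    · exact h3 h
    · refine h3 (pow_eq_zero_iff two_ne_zero |>.mp ?_)
      rw [← h5, h]; ring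
  · rw [pow_succ, pow_two]
    ext a b
    fin_cases a <;> fin_cases b <;>
      simp only [OX, Matrix.mul_apply, Fin.sum_univ_four, Fin.mk_zero, Fin.mk_one,
        Fin.reduceFinMk, Matrix.of_apply, Matrix.cons_val', Matrix.cons_val_zero,
        Matrix.cons_val_one, Matrix.head_cons, Matrix.head_fin_const, Matrix.empty_val',
        Matrix.cons_val_fin_one, Matrix.zero_apply, Matrix.cons_val_two, Matrix.tail_cons, Matrix.cons_val_three]
    · linear_combination ((1)*w 1^2) * h1 + ((1)*w 0^2) * h2 + ((-1/2)*Rv 2) * h4 + ((1/2)*Rv 2) * h5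
    · linear_combination ((1)*Rv 2*w 0 + (-1)*Rv 0*w 0) * h2 + ((1/2)*w 0) * h4 + ((1/2)*w 0) * h5 + ((1)*w 0*w 1) * h6
    · linear_combination ((-1)*Rv 1*w 1) * h1 + ((1/2)*w 1) * h4 + ((1/2)*w 1) * h5 + ((1)*w 1^2 + (1)*Rv 2^2) * h6
    · linear_combination ((1/2)*w 2) * h4 + ((1/2)*w 2) * h5 + ((1)*w 1*w 2) * h6
    · linear_combination ((-1)*Rv 2*w 0 + (1)*Rv 0*w 0) * h2 + ((-1/2)*w 0) * h4 + ((-1/2)*w 0) * h5 + ((-1)*w 0*w 1) * h6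
    · linear_combination ((2)*w 0^2 + (-1)*Rv 2^2 + (1)*Rv 0*Rv 2 + (-1)*Rv 0^2) * h2 + ((-1)*Rv 2) * h4
    · linear_combination ((1)*w 0*w 1) * h1 + ((1)*w 0*w 1) * h2 + ((-1)*Rv 2*w 0) * h6
    · linear_combination ((1)*w 0*w 2) * h2
    · linear_combination ((1)*Rv 1*w 1) * h1 + ((-1/2)*w 1) * h4 + ((-1/2)*w 1) * h5 + ((-1)*w 1^2 + (-1)*Rv 2^2) * h6
    · linear_combination ((1)*w 0*w 1) * h1 + ((1)*w 0*w 1) * h2 + ((-1)*Rv 2*w 0) * h6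
    · linear_combination ((2)*w 1^2 + (-1)*Rv 1^2) * h1
    · linear_combination ((1)*w 1*w 2) * h1 + ((1)*Rv 2*w 2) * h6
    · linear_combination ((-1/2)*w 2) * h4 + ((-1/2)*w 2) * h5 + ((-1)*w 1*w 2) * h6
    · linear_combination ((1)*w 0*w 2) * h2
    · linear_combination ((1)*w 1*w 2) * h1 + ((1)*Rv 2*w 2) * h6
    · linear_combination ((1)*Rv 2) * h5
  · intro hz
    rw [pow_two] at hz
    have e := congr_fun (congr_fun hz 0) 3
    simp only [OX, Matrix.mul_apply, Fin.sum_univ_four, Fin.mk_zero, Fin.mk_one,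
      Fin.reduceFinMk, Matrix.of_apply, Matrix.cons_val', Matrix.cons_val_zero,
      Matrix.cons_val_one, Matrix.head_cons, Matrix.head_fin_const, Matrix.empty_val',
      Matrix.cons_val_fin_one, Matrix.zero_apply, Matrix.cons_val_two, Matrix.tail_cons,
      Matrix.cons_val_three] at e
    have key : Rv 2 * w 2 = 0 := by
      linear_combination (1 : ℝ) * e + (0 : ℝ) * h1
    rcases mul_eq_zero.mp key with h|h
    · exact h3 h
    · refine h3 (pow_eq_zero_iff two_ne_zero |>.mp ?_)
      rw [← h5, h]; ring
private lemma caseD2 (Rv w : Fin 3 → ℝ) (h1 : Rv 2 = 0) (h2 : Rv 0 = -Rv 1)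
    (h3 : Rv 1 ≠ 0) (h4 : 2*w 0^2 = Rv 1^2) (h5 : 2*w 1^2 = Rv 1^2) (h6 : w 2 = 0) :
    (MX Rv w)^3 = 0 ∧ (MX Rv w)^2 ≠ 0 ∧ (OX Rv w)^3 = 0 ∧ (OX Rv w)^2 ≠ 0 := by
  refine ⟨?_, ?_, ?_, ?_⟩
  · rw [pow_succ, pow_two]
    ext a b
    fin_cases a <;> fin_cases b <;>
      simp only [MX, Matrix.mul_apply, Fin.sum_univ_three, Fin.mk_zero, Fin.mk_one,
        Fin.reduceFinMk, Matrix.of_apply, Matrix.cons_val', Matrix.cons_val_zero,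
        Matrix.cons_val_one, Matrix.head_cons, Matrix.head_fin_const, Matrix.empty_val',
        Matrix.cons_val_fin_one, Matrix.zero_apply, Matrix.cons_val_two, Matrix.tail_cons]
    · linear_combination ((1/8)*w 1^2) * h1 + ((1/4)*w 2^2 + (1/4)*w 1^2 + (-1/8)*Rv 1^2 + (1/8)*Rv 0*Rv 1 + (-1/8)*Rv 0^2) * h2 + ((-1/8)*Rv 1) * h5 + ((-1/8)*Rv 1*w 2) * h6
    · linear_combination ((-1/8)*w 0*w 1) * h1 + ((-1/8)*w 0*w 1 + (-1/8)*Rv 0*w 2) * h2 + ((1/16)*w 2) * h4 + ((1/16)*w 2) * h5 + ((1/8)*w 2^2) * h6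
    · linear_combination ((-1/8)*w 0*w 2 + (1/8)*Rv 2*w 1 + (1/8)*Rv 0*w 1) * h1 + ((-1/8)*w 0*w 2 + (-1/8)*Rv 1*w 1 + (1/8)*Rv 0*w 1) * h2 + ((-1/16)*w 1) * h4 + ((-1/16)*w 1) * h5 + ((-1/8)*w 1*w 2) * h6
    · linear_combination ((-1/8)*w 0*w 1) * h1 + ((-1/8)*w 0*w 1 + (1/8)*Rv 0*w 2) * h2 + ((-1/16)*w 2) * h4 + ((-1/16)*w 2) * h5 + ((-1/8)*w 2^2) * h6
    · linear_combination ((1/8)*w 0^2) * h1 + ((1/8)*w 2^2) * h2 + ((1/8)*Rv 1) * h4 + ((1/8)*Rv 1*w 2) * h6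
    · linear_combination ((-1/8)*w 1*w 2 + (-1/8)*Rv 2*w 0 + (-1/8)*Rv 1*w 0) * h1 + ((-1/8)*w 1*w 2) * h2 + ((1/16)*w 0) * h4 + ((1/16)*w 0) * h5 + ((1/8)*w 0*w 2) * h6
    · linear_combination ((-1/8)*w 0*w 2 + (-1/8)*Rv 2*w 1 + (-1/8)*Rv 0*w 1) * h1 + ((-1/8)*w 0*w 2 + (1/8)*Rv 1*w 1 + (-1/8)*Rv 0*w 1) * h2 + ((1/16)*w 1) * h4 + ((1/16)*w 1) * h5 + ((1/8)*w 1*w 2) * h6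
    · linear_combination ((-1/8)*w 1*w 2 + (1/8)*Rv 2*w 0 + (1/8)*Rv 1*w 0) * h1 + ((-1/8)*w 1*w 2) * h2 + ((-1/16)*w 0) * h4 + ((-1/16)*w 0) * h5 + ((-1/8)*w 0*w 2) * h6
    · linear_combination ((1/4)*w 1^2 + (1/4)*w 0^2 + (-1/8)*Rv 2^2) * h1 + ((1/8)*w 1^2) * h2 + ((1/16)*Rv 1) * h4 + ((-1/16)*Rv 1) * h5
  · intro hz
    rw [pow_two] at hz
    have e := congr_fun (congr_fun hz 0) 2
    simp only [MX, Matrix.mul_apply, Fin.sum_univ_three, Fin.mk_zero, Fin.mk_one,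
      Fin.reduceFinMk, Matrix.of_apply, Matrix.cons_val', Matrix.cons_val_zero,
      Matrix.cons_val_one, Matrix.head_cons, Matrix.head_fin_const, Matrix.empty_val',
      Matrix.cons_val_fin_one, Matrix.zero_apply, Matrix.cons_val_two, Matrix.tail_cons] at e
    have key : Rv 1 * w 1 = 0 := by
      linear_combination (4 : ℝ) * e + ((1)*w 1) * h1 + ((1)*w 1) * h2 + ((-1)*w 0) * h6
    rcases mul_eq_zero.mp key with h|h
    · exact h3 h
    · refine h3 (pow_eq_zero_iff two_ne_zero |>.mp ?_)
      rw [← h5, h]; ring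
  · rw [pow_succ, pow_two]
    ext a b
    fin_cases a <;> fin_cases b <;>
      simp only [OX, Matrix.mul_apply, Fin.sum_univ_four, Fin.mk_zero, Fin.mk_one,
        Fin.reduceFinMk, Matrix.of_apply, Matrix.cons_val', Matrix.cons_val_zero,
        Matrix.cons_val_one, Matrix.head_cons, Matrix.head_fin_const, Matrix.empty_val',
        Matrix.cons_val_fin_one, Matrix.zero_apply, Matrix.cons_val_two, Matrix.tail_cons, Matrix.cons_val_three]
    · linear_combination ((1)*w 2^2) * h1 + ((1)*w 0^2) * h2 + ((-1/2)*Rv 1) * h4 + ((1/2)*Rv 1) * h5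
    · linear_combination ((1)*Rv 1*w 0 + (-1)*Rv 0*w 0) * h2 + ((1/2)*w 0) * h4 + ((1/2)*w 0) * h5 + ((1)*w 0*w 2) * h6
    · linear_combination ((1/2)*w 1) * h4 + ((1/2)*w 1) * h5 + ((1)*w 1*w 2) * h6
    · linear_combination ((-1)*Rv 2*w 2) * h1 + ((1/2)*w 2) * h4 + ((1/2)*w 2) * h5 + ((1)*w 2^2 + (1)*Rv 1^2) * h6
    · linear_combination ((-1)*Rv 1*w 0 + (1)*Rv 0*w 0) * h2 + ((-1/2)*w 0) * h4 + ((-1/2)*w 0) * h5 + ((-1)*w 0*w 2) * h6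
    · linear_combination ((2)*w 0^2 + (-1)*Rv 1^2 + (1)*Rv 0*Rv 1 + (-1)*Rv 0^2) * h2 + ((-1)*Rv 1) * h4
    · linear_combination ((1)*w 0*w 1) * h2
    · linear_combination ((1)*w 0*w 2) * h1 + ((1)*w 0*w 2) * h2 + ((-1)*Rv 1*w 0) * h6
    · linear_combination ((-1/2)*w 1) * h4 + ((-1/2)*w 1) * h5 + ((-1)*w 1*w 2) * h6
    · linear_combination ((1)*w 0*w 1) * h2
    · linear_combination ((1)*Rv 1) * h5
    · linear_combination ((1)*w 1*w 2) * h1 + ((1)*Rv 1*w 1) * h6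
    · linear_combination ((1)*Rv 2*w 2) * h1 + ((-1/2)*w 2) * h4 + ((-1/2)*w 2) * h5 + ((-1)*w 2^2 + (-1)*Rv 1^2) * h6
    · linear_combination ((1)*w 0*w 2) * h1 + ((1)*w 0*w 2) * h2 + ((-1)*Rv 1*w 0) * h6
    · linear_combination ((1)*w 1*w 2) * h1 + ((1)*Rv 1*w 1) * h6
    · linear_combination ((2)*w 2^2 + (-1)*Rv 2^2) * h1
  · intro hz
    rw [pow_two] at hz
    have e := congr_fun (congr_fun hz 0) 2
    simp only [OX, Matrix.mul_apply, Fin.sum_univ_four, Fin.mk_zero, Fin.mk_one,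
      Fin.reduceFinMk, Matrix.of_apply, Matrix.cons_val', Matrix.cons_val_zero,
      Matrix.cons_val_one, Matrix.head_cons, Matrix.head_fin_const, Matrix.empty_val',
      Matrix.cons_val_fin_one, Matrix.zero_apply, Matrix.cons_val_two, Matrix.tail_cons,
      Matrix.cons_val_three] at e
    have key : Rv 1 * w 1 = 0 := by
      linear_combination (1 : ℝ) * e + (0 : ℝ) * h1
    rcases mul_eq_zero.mp key with h|h
    · exact h3 h
    · refine h3 (pow_eq_zero_iff two_ne_zero |>.mp ?_)
      rw [← h5, h]; ring

set_option maxHeartbeats 1000000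

/-- Both `M` and `Ω` of the 5D type II Weyl operator are nilpotent iff, after a suitable
permutation of indices, `R = 0`, `R₄ = 0`, `R₃ = -R₅ ≠ 0`, `2w₃² = 2w₅² = R₅²`, `w₄ = 0`.
In that case `M³ = 0 ≠ M²` and `Ω³ = 0 ≠ Ω²`. -/
theorem stmt10 (Rv w : Fin 3 → ℝ)
    (hnz : ¬ (Rv = 0 ∧ w = 0))
    (M : Matrix (Fin 3) (Fin 3) ℝ)
    (hM : M = Matrix.of fun i j =>
      (if i = j then -(Rv i) / 2 else 0) - (1/2) * ∑ k, eps i j k * w k)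
    (R : ℝ) (hR : R = Rv 0 + Rv 1 + Rv 2)
    (Om : Matrix (Fin 4) (Fin 4) ℝ)
    (hOm : Om = !![R/2, -(w 0), -(w 1), -(w 2);
                   w 0, R/2 - Rv 0, 0, 0;
                   w 1, 0, R/2 - Rv 1, 0;
                   w 2, 0, 0, R/2 - Rv 2]) :
    ((IsNilpotent M ∧ IsNilpotent Om) ↔
      (R = 0 ∧ ∃ σ : Equiv.Perm (Fin 3),
        Rv (σ 1) = 0 ∧ Rv (σ 0) = -(Rv (σ 2)) ∧ Rv (σ 2) ≠ 0 ∧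
        2 * (w (σ 0)) ^ 2 = (Rv (σ 2)) ^ 2 ∧ 2 * (w (σ 2)) ^ 2 = (Rv (σ 2)) ^ 2 ∧
        w (σ 1) = 0)) ∧
    ((IsNilpotent M ∧ IsNilpotent Om) →
      (M ^ 3 = 0 ∧ M ^ 2 ≠ 0 ∧ Om ^ 3 = 0 ∧ Om ^ 2 ≠ 0)) := by
  have hM' : M = MX Rv w := by
    subst hM
    ext i j
    fin_cases i <;> fin_cases j <;>
      simp [MX, eps, Fin.sum_univ_three] <;> ring
  have hnz6 : ¬(Rv 0 = 0 ∧ Rv 1 = 0 ∧ Rv 2 = 0 ∧ w 0 = 0 ∧ w 1 = 0 ∧ w 2 = 0) := by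
    rintro ⟨a, b, c, d, e, f⟩
    refine hnz ⟨?_, ?_⟩
    · ext i; fin_cases i
      · exact a
      · exact b
      · exact c
    · ext i; fin_cases i
      · exact d
      · exact e
      · exact f
  have hDnil : IsNilpotent M → IsNilpotent Om →
      ((Rv 0 = 0 ∧ Rv 1 = -Rv 2 ∧ Rv 2 ≠ 0 ∧ 2*w 1^2 = Rv 2^2 ∧ 2*w 2^2 = Rv 2^2 ∧ w 0 = 0) ∨
       (Rv 1 = 0 ∧ Rv 0 = -Rv 2 ∧ Rv 2 ≠ 0 ∧ 2*w 0^2 = Rv 2^2 ∧ 2*w 2^2 = Rv 2^2 ∧ w 1 = 0) ∨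
       (Rv 2 = 0 ∧ Rv 0 = -Rv 1 ∧ Rv 1 ≠ 0 ∧ 2*w 0^2 = Rv 1^2 ∧ 2*w 1^2 = Rv 1^2 ∧ w 2 = 0)) := by
    intro hnM hnOm
    have t1 : Matrix.trace M = 0 := by
      have := trace_pow_zero hnM one_ne_zero; rwa [pow_one] at this
    have t2 : Matrix.trace (M * M) = 0 := by
      have := trace_pow_zero hnM two_ne_zero; rwa [pow_two] at this
    have t3 : M.det = 0 := det_zero_of_nilp hnM
    rw [hM'] at t1 t2 t3
    rw [Matrix.trace_fin_three] at t1 t2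
    rw [Matrix.det_fin_three] at t3
    simp only [MX, Matrix.mul_apply, Fin.sum_univ_three, Fin.mk_zero, Fin.mk_one,
      Fin.reduceFinMk, Matrix.of_apply, Matrix.cons_val', Matrix.cons_val_zero,
      Matrix.cons_val_one, Matrix.head_cons, Matrix.head_fin_const, Matrix.empty_val',
      Matrix.cons_val_fin_one, Matrix.cons_val_two, Matrix.tail_cons] at t1 t2 t3
    have e1 : Rv 0 + Rv 1 + Rv 2 = 0 := by linarith
    have e2 : Rv 0^2 + Rv 1^2 + Rv 2^2 = 2*(w 0^2 + w 1^2 + w 2^2) := by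
      linear_combination 4 * t2
    have hR0 : R = 0 := by rw [hR]; exact e1
    have hOm' : Om = OX Rv w := by
      rw [hOm]
      ext i j
      fin_cases i <;> fin_cases j <;> simp [OX, hR0] <;> norm_num
    have t5 : Matrix.trace (OX Rv w * OX Rv w * OX Rv w) = 0 := by
      have := trace_pow_zero hnOm three_ne_zero
      rw [hOm', pow_succ, pow_two] at this
      exact this
    have t7 : Matrix.trace (OX Rv w * OX Rv w * OX Rv w * OX Rv w) = 0 := by
      have := trace_pow_zero hnOm four_ne_zero
      rw [hOm', pow_succ, pow_succ, pow_two] at this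
      exact this
    simp only [OX, Matrix.trace, Matrix.diag, Matrix.mul_apply, Fin.sum_univ_four,
      Fin.mk_zero, Fin.mk_one, Fin.reduceFinMk, Matrix.of_apply, Matrix.cons_val',
      Matrix.cons_val_zero, Matrix.cons_val_one, Matrix.head_cons, Matrix.head_fin_const,
      Matrix.empty_val', Matrix.cons_val_fin_one, Matrix.cons_val_two, Matrix.tail_cons,
      Matrix.cons_val_three] at t5 t7
    have e3 : Rv 0*w 0^2 + Rv 1*w 1^2 + Rv 2*w 2^2 = 0 := by
      linear_combination (1/6)*t5 + (-4)*t3 +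
        (((Rv 0+Rv 1+Rv 2)^2 - 3*(Rv 0*Rv 1+Rv 0*Rv 2+Rv 1*Rv 2))/6)*e1
    have e4 : Rv 0*Rv 1*Rv 2 = 0 := by linear_combination (-8)*t3 + (-1)*e3
    have e5 : w 0^2*Rv 1*Rv 2 + w 1^2*Rv 0*Rv 2 + w 2^2*Rv 0*Rv 1 = 0 := by
      linear_combination ((Rv 0+Rv 1+Rv 2)^3/24)*e1
        + ((Rv 0^2+Rv 1^2+Rv 2^2 - 2*(w 0^2+w 1^2+w 2^2))/8 - (Rv 0+Rv 1+Rv 2)^2/4)*e2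
        + (-(Rv 0+Rv 1+Rv 2)/3)*t5 + (-1/4)*t7
    rcases mul_eq_zero.mp e4 with h' | hc
    · rcases mul_eq_zero.mp h' with ha | hb
      · exact Or.inl (solveD (Rv 1) (Rv 0) (Rv 2) (w 1) (w 0) (w 2)
          (fun hh => hnz6 ⟨hh.2.1, hh.1, hh.2.2.1, hh.2.2.2.2.1, hh.2.2.2.1, hh.2.2.2.2.2⟩)
          (by linarith) (by linear_combination e2) (by linear_combination e3)
          (by linear_combination e5) ha)
      · exact Or.inr (Or.inl (solveD (Rv 0) (Rv 1) (Rv 2) (w 0) (w 1) (w 2)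
          (fun hh => hnz6 hh) e1 e2 e3 e5 hb))
    · exact Or.inr (Or.inr (solveD (Rv 0) (Rv 2) (Rv 1) (w 0) (w 2) (w 1)
        (fun hh => hnz6 ⟨hh.1, hh.2.2.1, hh.2.1, hh.2.2.2.1, hh.2.2.2.2.2, hh.2.2.2.2.1⟩)
        (by linarith) (by linear_combination e2) (by linear_combination e3)
        (by linear_combination e5) hc))
  have hR0D : ((Rv 0 = 0 ∧ Rv 1 = -Rv 2 ∧ Rv 2 ≠ 0 ∧ 2*w 1^2 = Rv 2^2 ∧ 2*w 2^2 = Rv 2^2 ∧ w 0 = 0) ∨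
       (Rv 1 = 0 ∧ Rv 0 = -Rv 2 ∧ Rv 2 ≠ 0 ∧ 2*w 0^2 = Rv 2^2 ∧ 2*w 2^2 = Rv 2^2 ∧ w 1 = 0) ∨
       (Rv 2 = 0 ∧ Rv 0 = -Rv 1 ∧ Rv 1 ≠ 0 ∧ 2*w 0^2 = Rv 1^2 ∧ 2*w 1^2 = Rv 1^2 ∧ w 2 = 0)) →
      R = 0 := by
    rintro (⟨a, b, -⟩ | ⟨a, b, -⟩ | ⟨a, b, -⟩) <;> rw [hR] <;> linarith
  have hquad : ((Rv 0 = 0 ∧ Rv 1 = -Rv 2 ∧ Rv 2 ≠ 0 ∧ 2*w 1^2 = Rv 2^2 ∧ 2*w 2^2 = Rv 2^2 ∧ w 0 = 0) ∨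
       (Rv 1 = 0 ∧ Rv 0 = -Rv 2 ∧ Rv 2 ≠ 0 ∧ 2*w 0^2 = Rv 2^2 ∧ 2*w 2^2 = Rv 2^2 ∧ w 1 = 0) ∨
       (Rv 2 = 0 ∧ Rv 0 = -Rv 1 ∧ Rv 1 ≠ 0 ∧ 2*w 0^2 = Rv 1^2 ∧ 2*w 1^2 = Rv 1^2 ∧ w 2 = 0)) →
      (M ^ 3 = 0 ∧ M ^ 2 ≠ 0 ∧ Om ^ 3 = 0 ∧ Om ^ 2 ≠ 0) := by
    intro hd
    have hR0 : R = 0 := hR0D hd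
    have hOm' : Om = OX Rv w := by
      rw [hOm]
      ext i j
      fin_cases i <;> fin_cases j <;> simp [OX, hR0] <;> norm_num
    rw [hM', hOm']
    rcases hd with h | h | h
    · exact caseD0 Rv w h.1 h.2.1 h.2.2.1 h.2.2.2.1 h.2.2.2.2.1 h.2.2.2.2.2
    · exact caseD1 Rv w h.1 h.2.1 h.2.2.1 h.2.2.2.1 h.2.2.2.2.1 h.2.2.2.2.2
    · exact caseD2 Rv w h.1 h.2.1 h.2.2.1 h.2.2.2.1 h.2.2.2.2.1 h.2.2.2.2.2
  have hexist : ((Rv 0 = 0 ∧ Rv 1 = -Rv 2 ∧ Rv 2 ≠ 0 ∧ 2*w 1^2 = Rv 2^2 ∧ 2*w 2^2 = Rv 2^2 ∧ w 0 = 0) ∨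
       (Rv 1 = 0 ∧ Rv 0 = -Rv 2 ∧ Rv 2 ≠ 0 ∧ 2*w 0^2 = Rv 2^2 ∧ 2*w 2^2 = Rv 2^2 ∧ w 1 = 0) ∨
       (Rv 2 = 0 ∧ Rv 0 = -Rv 1 ∧ Rv 1 ≠ 0 ∧ 2*w 0^2 = Rv 1^2 ∧ 2*w 1^2 = Rv 1^2 ∧ w 2 = 0)) →
      (∃ σ : Equiv.Perm (Fin 3),
        Rv (σ 1) = 0 ∧ Rv (σ 0) = -(Rv (σ 2)) ∧ Rv (σ 2) ≠ 0 ∧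
        2 * (w (σ 0)) ^ 2 = (Rv (σ 2)) ^ 2 ∧ 2 * (w (σ 2)) ^ 2 = (Rv (σ 2)) ^ 2 ∧
        w (σ 1) = 0) := by
    rintro (⟨a, b, c, d, e, f⟩ | ⟨a, b, c, d, e, f⟩ | ⟨a, b, c, d, e, f⟩)
    · refine ⟨Equiv.swap 0 1, ?_, ?_, ?_, ?_, ?_, ?_⟩ <;>
        simp only [show ((Equiv.swap (0 : Fin 3) 1) 0) = 1 from by decide,
            show ((Equiv.swap (0 : Fin 3) 1) 1) = 0 from by decide,
            show ((Equiv.swap (0 : Fin 3) 1) 2) = 2 from by decide] <;>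
        first | exact a | exact b | exact c | exact d | exact e | exact f
    · exact ⟨Equiv.refl _, a, b, c, d, e, f⟩
    · refine ⟨Equiv.swap 1 2, ?_, ?_, ?_, ?_, ?_, ?_⟩ <;>
        simp only [show ((Equiv.swap (1 : Fin 3) 2) 0) = 0 from by decide,
            show ((Equiv.swap (1 : Fin 3) 2) 1) = 2 from by decide,
            show ((Equiv.swap (1 : Fin 3) 2) 2) = 1 from by decide] <;>
        first | exact a | exact b | exact c | exact d | exact e | exact f
  have hDex : (∃ σ : Equiv.Perm (Fin 3),
        Rv (σ 1) = 0 ∧ Rv (σ 0) = -(Rv (σ 2)) ∧ Rv (σ 2) ≠ 0 ∧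
        2 * (w (σ 0)) ^ 2 = (Rv (σ 2)) ^ 2 ∧ 2 * (w (σ 2)) ^ 2 = (Rv (σ 2)) ^ 2 ∧
        w (σ 1) = 0) →
      ((Rv 0 = 0 ∧ Rv 1 = -Rv 2 ∧ Rv 2 ≠ 0 ∧ 2*w 1^2 = Rv 2^2 ∧ 2*w 2^2 = Rv 2^2 ∧ w 0 = 0) ∨
       (Rv 1 = 0 ∧ Rv 0 = -Rv 2 ∧ Rv 2 ≠ 0 ∧ 2*w 0^2 = Rv 2^2 ∧ 2*w 2^2 = Rv 2^2 ∧ w 1 = 0) ∨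
       (Rv 2 = 0 ∧ Rv 0 = -Rv 1 ∧ Rv 1 ≠ 0 ∧ 2*w 0^2 = Rv 1^2 ∧ 2*w 1^2 = Rv 1^2 ∧ w 2 = 0)) := by
    rintro ⟨σ, hA, hB, hC, hDD, hE, hF⟩
    have d01 : σ 0 ≠ σ 1 := fun h => by simpa using σ.injective h
    have d02 : σ 0 ≠ σ 2 := fun h => by simpa using σ.injective h
    have d12 : σ 1 ≠ σ 2 := fun h => by simpa using σ.injective h
    have hv : ∀ t : Fin 3, t = 0 ∨ t = 1 ∨ t = 2 := by decide
    rcases hv (σ 0) with h0 | h0 | h0 <;> rcases hv (σ 1) with h1 | h1 | h1 <;>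
      rcases hv (σ 2) with h2 | h2 | h2 <;>
      rw [h0] at hB hDD d01 d02 <;> rw [h1] at hA hF d01 d12 <;>
      rw [h2] at hB hC hDD hE d02 d12 <;>
      first
        | exact absurd rfl d01
        | exact absurd rfl d02
        | exact absurd rfl d12
        | exact Or.inl ⟨hA, hB, hC, hDD, hE, hF⟩
        | exact Or.inr (Or.inl ⟨hA, hB, hC, hDD, hE, hF⟩)
        | exact Or.inr (Or.inr ⟨hA, hB, hC, hDD, hE, hF⟩)
        | (obtain ⟨f1, f2, f3, f4⟩ := flipD (Rv 0) (Rv 2) (w 0) (w 2) hB hC hE hDD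
           exact Or.inr (Or.inl ⟨hA, f1, f2, f3, f4, hF⟩))
        | (obtain ⟨f1, f2, f3, f4⟩ := flipD (Rv 1) (Rv 2) (w 1) (w 2) hB hC hE hDD
           exact Or.inl ⟨hA, f1, f2, f3, f4, hF⟩)
        | (obtain ⟨f1, f2, f3, f4⟩ := flipD (Rv 0) (Rv 1) (w 0) (w 1) hB hC hE hDD
           exact Or.inr (Or.inr ⟨hA, f1, f2, f3, f4, hF⟩))
  refine ⟨⟨fun hb => ⟨hR0D (hDnil hb.1 hb.2), hexist (hDnil hb.1 hb.2)⟩, ?_⟩,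
          fun hb => hquad (hDnil hb.1 hb.2)⟩
  rintro ⟨-, hs⟩
  have q := hquad (hDex hs)
  exact ⟨⟨3, q.1⟩, ⟨3, q.2.2.1⟩⟩
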